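/- There is a bijection, preserving the LRmax specification, between permutations of [n] avoiding 3-2-1 and permutations of [n] avoiding 3-1-2; in particular the number of 3-2-1-avoiding permutations of [n] equals the number of 3-1-2-avoiding permutations of [n]. -/

import Mathlib

def IsLRmax {n : ℕ} (π : Equiv.Perm (Fin n)) (p : Fin n) : Prop :=
  ∀ q, q < p → π q < π p

def Avoids321 {n : ℕ} (π : Equiv.Perm (Fin n)) : Prop :=
  ¬ ∃ i j k : Fin n, i < j ∧ j < k ∧ π k < π j ∧ π j < π i

def Avoids312 {n : ℕ} (π : Equiv.Perm (Fin n)) : Prop :=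
  ¬ ∃ i j k : Fin n, i < j ∧ j < k ∧ π j < π k ∧ π k < π i

/-- σ and τ have the same LRmax specification: same positions of
left-to-right maxima and the same values there. -/
def SameLRmaxSpec {n : ℕ} (σ τ : Equiv.Perm (Fin n)) : Prop :=
  (∀ p, IsLRmax σ p ↔ IsLRmax τ p) ∧ ∀ p, IsLRmax σ p → σ p = τ p

namespace LRmaxAux

open Equiv

variable {n : ℕ}

theorem spec_refl (σ : Equiv.Perm (Fin n)) : SameLRmaxSpec σ σ :=
  ⟨fun _ => Iff.rfl, fun _ _ => rfl⟩

theorem spec_symm {σ τ : Equiv.Perm (Fin n)} (h : SameLRmaxSpec σ τ) :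
    SameLRmaxSpec τ σ :=
  ⟨fun p => (h.1 p).symm, fun p hp => ((h.2 p ((h.1 p).2 hp))).symm⟩

theorem spec_trans {σ τ ρ : Equiv.Perm (Fin n)} (h1 : SameLRmaxSpec σ τ)
    (h2 : SameLRmaxSpec τ ρ) : SameLRmaxSpec σ ρ :=
  ⟨fun p => (h1.1 p).trans (h2.1 p),
   fun p hp => (h1.2 p hp).trans (h2.2 p ((h1.1 p).1 hp))⟩

/-- The key swap lemma: if positions `j < k` both carry values dominated by an
earlier value `σ i` (with `i < j`), then swapping the entries at `j` and `k`
preserves the LRmax specification. -/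
theorem swap_spec (σ : Equiv.Perm (Fin n)) {i j k : Fin n} (hij : i < j) (hjk : j < k)
    (h1 : σ j < σ i) (h2 : σ k < σ i) :
    SameLRmaxSpec σ (σ * Equiv.swap j k) := by
  set τ := σ * Equiv.swap j k with hτ
  have hjk' : j ≠ k := ne_of_lt hjk
  have hτj : τ j = σ k := by simp [hτ, Equiv.Perm.mul_apply]
  have hτk : τ k = σ j := by simp [hτ, Equiv.Perm.mul_apply]
  have hτp : ∀ p : Fin n, p ≠ j → p ≠ k → τ p = σ p := by
    intro p hpj hpk
    simp [hτ, Equiv.Perm.mul_apply, Equiv.swap_apply_of_ne_of_ne hpj hpk]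
  have hnotσj : ¬ IsLRmax σ j := fun h => absurd (h i hij) (not_lt.2 h1.le)
  have hnotτj : ¬ IsLRmax τ j := by
    intro h
    have := h i hij
    rw [hτj, hτp i (ne_of_lt hij) (ne_of_lt (hij.trans hjk))] at this
    exact absurd this (not_lt.2 h2.le)
  have hnotσk : ¬ IsLRmax σ k := fun h => absurd (h i (hij.trans hjk)) (not_lt.2 h2.le)
  have hnotτk : ¬ IsLRmax τ k := by
    intro h
    have := h i (hij.trans hjk)
    rw [hτk, hτp i (ne_of_lt hij) (ne_of_lt (hij.trans hjk))] at this
    exact absurd this (not_lt.2 h1.le)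
  have main : ∀ p, IsLRmax σ p ↔ IsLRmax τ p := by
    intro p
    rcases lt_trichotomy p j with hpj | rfl | hjp
    · -- p < j : everything relevant unchanged
      have hvals : ∀ q : Fin n, q ≤ p → τ q = σ q := by
        intro q hq
        exact hτp q (ne_of_lt (lt_of_le_of_lt hq hpj))
          (ne_of_lt ((lt_of_le_of_lt hq hpj).trans hjk))
      constructor
      · intro h q hq
        rw [hvals q hq.le, hvals p le_rfl]; exact h q hq
      · intro h q hq
        rw [← hvals q hq.le, ← hvals p le_rfl]; exact h q hq
    · exact iff_of_false hnotσj hnotτj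
    · rcases eq_or_ne p k with rfl | hpk
      · exact iff_of_false hnotσk hnotτk
      · -- j < p, p ≠ k
        have hpj' : p ≠ j := ne_of_gt hjp
        have hvp : τ p = σ p := hτp p hpj' hpk
        constructor
        · intro h q hq
          rw [hvp]
          rcases eq_or_ne q j with rfl | hqj
          · rw [hτj]
            rcases lt_or_gt_of_ne hpk with hpk' | hkp
            · exact lt_trans h2 (h i (hij.trans hjp))
            · exact h k hkp
          · rcases eq_or_ne q k with rfl | hqk
            · rw [hτk]; exact h j hjp
            · rw [hτp q hqj hqk]; exact h q hq
        · intro h q hq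
          have hip' : σ i < σ p := by
            have := h i (hij.trans hjp)
            rw [hvp, hτp i (ne_of_lt hij) (ne_of_lt (hij.trans hjk))] at this
            exact this
          rcases eq_or_ne q j with rfl | hqj
          · exact lt_trans h1 hip'
          · rcases eq_or_ne q k with rfl | hqk
            · exact lt_trans h2 hip'
            · have := h q hq
              rw [hvp, hτp q hqj hqk] at this
              exact this
  refine ⟨main, ?_⟩
  intro p hp
  have hpj : p ≠ j := fun h => hnotσj (h ▸ hp)
  have hpk : p ≠ k := fun h => hnotσk (h ▸ hp)
  exact (hτp p hpj hpk).symm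

/-- Not being an LRmax means some earlier entry is larger. -/
theorem exists_gt_of_not_lrmax {σ : Equiv.Perm (Fin n)} {p : Fin n}
    (h : ¬ IsLRmax σ p) : ∃ q, q < p ∧ σ p < σ q := by
  simp only [IsLRmax, not_forall] at h
  obtain ⟨q, hq, hle⟩ := h
  refine ⟨q, hq, lt_of_le_of_ne (not_lt.1 hle) ?_⟩
  intro hEq
  exact absurd (σ.injective hEq) (ne_of_lt hq).symm

theorem helper321 {σ τ : Equiv.Perm (Fin n)} (hτ : Avoids321 τ)
    (hspec : SameLRmaxSpec σ τ) {p : Fin n} (hmin : ∀ q, q < p → σ q = τ q)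
    (hlt : σ p < τ p) : False := by
  have hne : σ p ≠ τ p := ne_of_lt hlt
  have hnm : ¬ IsLRmax τ p := by
    intro h
    exact hne (hspec.2 p ((hspec.1 p).2 h))
  obtain ⟨i, hip, hi⟩ := exists_gt_of_not_lrmax hnm
  set r := τ.symm (σ p) with hr
  have hrv : τ r = σ p := by simp [hr]
  have hrp : r ≠ p := fun h => hne ((h ▸ hrv).symm)
  have hpr : p < r := by
    rcases lt_or_gt_of_ne hrp with h | h
    · exact absurd (σ.injective ((hmin r h).trans hrv).symm) hrp.symm
    · exact h
  exact hτ ⟨i, p, r, hip, hpr, by rw [hrv]; exact hlt, hi⟩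

theorem helper312 {σ τ : Equiv.Perm (Fin n)} (hσ : Avoids312 σ)
    (hspec : SameLRmaxSpec σ τ) {p : Fin n} (hmin : ∀ q, q < p → σ q = τ q)
    (hlt : σ p < τ p) : False := by
  have hne : σ p ≠ τ p := ne_of_lt hlt
  have hnm : ¬ IsLRmax τ p := by
    intro h
    exact hne (hspec.2 p ((hspec.1 p).2 h))
  obtain ⟨i, hip, hi⟩ := exists_gt_of_not_lrmax hnm
  have hi' : τ p < σ i := by rw [hmin i hip]; exact hi
  set q := σ.symm (τ p) with hq
  have hqv : σ q = τ p := by simp [hq]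
  have hqp : q ≠ p := fun h => hne (h ▸ hqv)
  have hpq : p < q := by
    rcases lt_or_gt_of_ne hqp with h | h
    · exact absurd (τ.injective ((hmin q h).symm.trans hqv)) hqp
    · exact h
  exact hσ ⟨i, p, q, hip, hpq, by rw [hqv]; exact hlt, by rw [hqv]; exact hi'⟩

/-- Two 321-avoiding permutations with the same LRmax spec are equal. -/
theorem unique321 {σ τ : Equiv.Perm (Fin n)} (hσ : Avoids321 σ) (hτ : Avoids321 τ)
    (hspec : SameLRmaxSpec σ τ) : σ = τ := by
  by_contra hne
  have hne' : ∃ p, σ p ≠ τ p := by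
    by_contra h
    push_neg at h
    exact hne (Equiv.ext h)
  classical
  set S : Finset (Fin n) := Finset.univ.filter (fun p => σ p ≠ τ p) with hS
  have hSne : S.Nonempty := by
    obtain ⟨p, hp⟩ := hne'
    exact ⟨p, by simp [hS, hp]⟩
  set p := S.min' hSne with hp
  have hpmem : σ p ≠ τ p := by
    have := S.min'_mem hSne
    simpa [hS] using this
  have hmin : ∀ q, q < p → σ q = τ q := by
    intro q hq
    by_contra h
    exact absurd (S.min'_le q (by simp [hS, h])) (not_le.2 hq)
  rcases lt_or_gt_of_ne hpmem with h | h
  · exact helper321 hτ hspec hmin h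
  · exact helper321 hσ (spec_symm hspec) (fun q hq => (hmin q hq).symm) h

/-- Two 312-avoiding permutations with the same LRmax spec are equal. -/
theorem unique312 {σ τ : Equiv.Perm (Fin n)} (hσ : Avoids312 σ) (hτ : Avoids312 τ)
    (hspec : SameLRmaxSpec σ τ) : σ = τ := by
  by_contra hne
  have hne' : ∃ p, σ p ≠ τ p := by
    by_contra h
    push_neg at h
    exact hne (Equiv.ext h)
  classical
  set S : Finset (Fin n) := Finset.univ.filter (fun p => σ p ≠ τ p) with hS
  have hSne : S.Nonempty := by
    obtain ⟨p, hp⟩ := hne'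
    exact ⟨p, by simp [hS, hp]⟩
  set p := S.min' hSne with hp
  have hpmem : σ p ≠ τ p := by
    have := S.min'_mem hSne
    simpa [hS] using this
  have hmin : ∀ q, q < p → σ q = τ q := by
    intro q hq
    by_contra h
    exact absurd (S.min'_le q (by simp [hS, h])) (not_le.2 hq)
  rcases lt_or_gt_of_ne hpmem with h | h
  · exact helper312 hσ hspec hmin h
  · exact helper312 hτ (spec_symm hspec) (fun q hq => (hmin q hq).symm) h

noncomputable instance lexLO : LinearOrder (Lex (Fin n → Fin n)) := by
  have h : WellFoundedLT (Fin n) := inferInstance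
  exact @Pi.Lex.linearOrder (Fin n) (fun _ => Fin n)
    inferInstance h (fun _ => inferInstance)

noncomputable def lexVal (σ : Equiv.Perm (Fin n)) : Lex (Fin n → Fin n) := toLex ⇑σ

theorem lexVal_lt {σ τ : Equiv.Perm (Fin n)} (j : Fin n)
    (h : ∀ q, q < j → τ q = σ q) (hj : τ j < σ j) : lexVal τ < lexVal σ := by
  have hp : Pi.Lex (· < ·) (fun {_} => (· < ·)) (⇑τ) (⇑σ) := ⟨j, fun q hq => h q hq, hj⟩
  exact hp

/-- Existence of a 321-avoider with the same spec. -/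
theorem exists321 (π : Equiv.Perm (Fin n)) :
    ∃ σ, SameLRmaxSpec π σ ∧ Avoids321 σ := by
  classical
  set S : Finset (Equiv.Perm (Fin n)) :=
    Finset.univ.filter (fun τ => SameLRmaxSpec π τ) with hS
  have hπ : π ∈ S := by simp [hS, spec_refl]
  obtain ⟨σ, hσS, hσmin⟩ := S.exists_min_image lexVal ⟨π, hπ⟩
  have hσspec : SameLRmaxSpec π σ := by simpa [hS] using hσS
  refine ⟨σ, hσspec, ?_⟩
  rintro ⟨i, j, k, hij, hjk, h1, h2⟩
  have hswap := swap_spec σ hij hjk h2 (h1.trans h2)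
  set τ := σ * Equiv.swap j k with hτ
  have hτS : τ ∈ S := by
    simp only [hS, Finset.mem_filter, Finset.mem_univ, true_and]
    exact spec_trans hσspec hswap
  have hlt : lexVal τ < lexVal σ := by
    refine lexVal_lt j (fun q hq => ?_) ?_
    · show (σ * Equiv.swap j k) q = σ q
      simp [Equiv.Perm.mul_apply,
        Equiv.swap_apply_of_ne_of_ne (ne_of_lt hq) (ne_of_lt (hq.trans hjk))]
    · show (σ * Equiv.swap j k) j < σ j
      simpa [Equiv.Perm.mul_apply] using h1
  exact absurd (hσmin τ hτS) (not_le.2 hlt)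

/-- Existence of a 312-avoider with the same spec. -/
theorem exists312 (π : Equiv.Perm (Fin n)) :
    ∃ σ, SameLRmaxSpec π σ ∧ Avoids312 σ := by
  classical
  set S : Finset (Equiv.Perm (Fin n)) :=
    Finset.univ.filter (fun τ => SameLRmaxSpec π τ) with hS
  have hπ : π ∈ S := by simp [hS, spec_refl]
  obtain ⟨σ, hσS, hσmax⟩ := S.exists_max_image lexVal ⟨π, hπ⟩
  have hσspec : SameLRmaxSpec π σ := by simpa [hS] using hσS
  refine ⟨σ, hσspec, ?_⟩
  rintro ⟨i, j, k, hij, hjk, h1, h2⟩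
  have hswap := swap_spec σ hij hjk (h1.trans h2) h2
  set τ := σ * Equiv.swap j k with hτ
  have hτS : τ ∈ S := by
    simp only [hS, Finset.mem_filter, Finset.mem_univ, true_and]
    exact spec_trans hσspec hswap
  have hlt : lexVal σ < lexVal τ := by
    refine lexVal_lt j (fun q hq => ?_) ?_
    · show σ q = (σ * Equiv.swap j k) q
      simp [Equiv.Perm.mul_apply,
        Equiv.swap_apply_of_ne_of_ne (ne_of_lt hq) (ne_of_lt (hq.trans hjk))]
    · show σ j < (σ * Equiv.swap j k) j
      simpa [Equiv.Perm.mul_apply] using h1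
  exact absurd (hσmax τ hτS) (not_le.2 hlt)

end LRmaxAux

theorem stmt5 (n : ℕ) :
    (∃ f : {π : Equiv.Perm (Fin n) // Avoids321 π} ≃
        {π : Equiv.Perm (Fin n) // Avoids312 π},
      ∀ σ, SameLRmaxSpec σ.1 (f σ).1) ∧
    Nat.card {π : Equiv.Perm (Fin n) // Avoids321 π} =
      Nat.card {π : Equiv.Perm (Fin n) // Avoids312 π} := by
  classical
  open LRmaxAux in
  have key : ∃ f : {π : Equiv.Perm (Fin n) // Avoids321 π} ≃
      {π : Equiv.Perm (Fin n) // Avoids312 π},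
      ∀ σ, SameLRmaxSpec σ.1 (f σ).1 := by
    refine ⟨{
      toFun := fun σ => ⟨(exists312 σ.1).choose, (exists312 σ.1).choose_spec.2⟩
      invFun := fun τ => ⟨(exists321 τ.1).choose, (exists321 τ.1).choose_spec.2⟩
      left_inv := ?_
      right_inv := ?_ }, ?_⟩
    · intro σ
      apply Subtype.ext
      exact unique321 (exists321 _).choose_spec.2 σ.2
        (spec_symm (spec_trans (exists312 σ.1).choose_spec.1
          (exists321 (exists312 σ.1).choose).choose_spec.1))
    · intro τ
      apply Subtype.ext
      exact unique312 (exists312 _).choose_spec.2 τ.2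
        (spec_symm (spec_trans (exists321 τ.1).choose_spec.1
          (exists312 (exists321 τ.1).choose).choose_spec.1))
    · intro σ
      exact (exists312 σ.1).choose_spec.1
  obtain ⟨f, hf⟩ := key
  exact ⟨⟨f, hf⟩, Nat.card_congr f⟩
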